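/- Let G be a group, H a subgroup of G, and N ⊆ M subgroups of G each normalized by H. If the indices [M:N], [MH:NH], and [M∩H : N∩H] are finite, then [MH : NH] = [M:N] / [M∩H : N∩H]. -/

import Mathlib

open Subgroup

/-- If `L ≤ A.normalizer`, then `A.subgroupOf L` is normal in `L`. -/
lemma aux_normal_subgroupOf {G : Type*} [Group G] {A L : Subgroup G}
    (h : L ≤ Subgroup.normalizer (A : Set G)) : (A.subgroupOf L).Normal := by
  constructor
  intro n hn g
  simp only [Subgroup.mem_subgroupOf] at hn ⊢
  have := (Subgroup.mem_normalizer_iff.mp (h g.2)) (n : G)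
  simpa using this.mp hn

/-- Second isomorphism theorem for relIndex, normalizer version. -/
lemma auxA {G : Type*} [Group G] (A K : Subgroup G) (h : K ≤ Subgroup.normalizer (A : Set G)) :
    A.relIndex (K ⊔ A) = A.relIndex K := by
  have hKL : K ≤ K ⊔ A := le_sup_left
  have hAL : A ≤ K ⊔ A := le_sup_right
  haveI : (A.subgroupOf (K ⊔ A)).Normal :=
    aux_normal_subgroupOf (sup_le h Subgroup.le_normalizer)
  have h1 := Subgroup.relIndex_sup_right (K.subgroupOf (K ⊔ A)) (A.subgroupOf (K ⊔ A))
  rw [← Subgroup.subgroupOf_sup hKL hAL, Subgroup.subgroupOf_self,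
    Subgroup.relIndex_top_right, Subgroup.relIndex_subgroupOf hKL] at h1
  rw [← h1]
  rfl

/-- Elements of `M ⊔ H` factor as products when `H` normalizes `M`. -/
lemma aux_mem_sup {G : Type*} [Group G] {M H : Subgroup G} (hHM : H ≤ Subgroup.normalizer (M : Set G))
    {g : G} (hg : g ∈ M ⊔ H) : ∃ m ∈ M, ∃ h ∈ H, g = m * h := by
  have hML : M ≤ M ⊔ H := le_sup_left
  have hHL : H ≤ M ⊔ H := le_sup_right
  haveI : (M.subgroupOf (M ⊔ H)).Normal :=
    aux_normal_subgroupOf (sup_le Subgroup.le_normalizer hHM)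
  have hg' : (⟨g, hg⟩ : (M ⊔ H : Subgroup G)) ∈ M.subgroupOf (M ⊔ H) ⊔ H.subgroupOf (M ⊔ H) := by
    rw [← Subgroup.subgroupOf_sup hML hHL, Subgroup.subgroupOf_self]
    exact Subgroup.mem_top _
  rw [← SetLike.mem_coe, Subgroup.normal_mul] at hg'
  obtain ⟨m, hm, h, hh, hmh⟩ := hg'
  refine ⟨(m : G), hm, (h : G), hh, ?_⟩
  have := congrArg Subtype.val hmh
  simpa using this.symm

/-- Dedekind identity under the normalization hypothesis. -/
lemma aux_dedekind {G : Type*} [Group G] {H M N : Subgroup G} (hNM : N ≤ M)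
    (hHN : H ≤ Subgroup.normalizer (N : Set G)) : M ⊓ (N ⊔ H) = N ⊔ (M ⊓ H) := by
  apply le_antisymm
  · intro x hx
    obtain ⟨hxM, hxNH⟩ := Subgroup.mem_inf.mp hx
    obtain ⟨n, hn, h, hh, rfl⟩ := aux_mem_sup hHN hxNH
    have hhM : h ∈ M := by
      have : n⁻¹ * (n * h) ∈ M := M.mul_mem (M.inv_mem (hNM hn)) hxM
      simpa using this
    exact Subgroup.mul_mem_sup hn (Subgroup.mem_inf.mpr ⟨hhM, hh⟩)
  · exact sup_le (le_inf hNM le_sup_left) (le_inf inf_le_left (inf_le_right.trans le_sup_right))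

/-- Coset counting: `[M : M ⊓ (N ⊔ H)] = [M ⊔ H : N ⊔ H]`. -/
lemma auxB {G : Type*} [Group G] (H M N : Subgroup G) (hNM : N ≤ M)
    (hHM : H ≤ Subgroup.normalizer (M : Set G)) :
    (M ⊓ (N ⊔ H)).relIndex M = (N ⊔ H).relIndex (M ⊔ H) := by
  rw [Subgroup.relIndex, Subgroup.relIndex, Subgroup.index, Subgroup.index]
  apply Nat.card_congr
  have hNH_MH : (N ⊔ H : Subgroup G) ≤ M ⊔ H := sup_le (hNM.trans le_sup_left) le_sup_right
  have hMMH : M ≤ M ⊔ H := le_sup_left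
  refine Equiv.ofBijective (Quotient.map'
    (fun m => (⟨(m : G), hMMH m.2⟩ : (M ⊔ H : Subgroup G)))
    (fun a b hab => ?_)) ⟨?_, ?_⟩
  · rw [QuotientGroup.leftRel_apply] at hab ⊢
    rw [Subgroup.mem_subgroupOf] at hab ⊢
    simpa using (Subgroup.mem_inf.mp hab).2
  · intro a b hab
    induction a using Quotient.inductionOn'
    induction b using Quotient.inductionOn'
    rename_i a b
    simp only [Quotient.map'_mk''] at hab
    apply Quotient.sound'
    have h2 := Quotient.exact' hab
    rw [QuotientGroup.leftRel_apply] at h2 ⊢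
    rw [Subgroup.mem_subgroupOf] at h2 ⊢
    refine Subgroup.mem_inf.mpr ⟨M.mul_mem (M.inv_mem a.2) b.2, ?_⟩
    simpa using h2
  · intro q
    induction q using Quotient.inductionOn'
    rename_i g
    obtain ⟨m, hm, h, hh, hgmh⟩ := aux_mem_sup hHM g.2
    refine ⟨Quotient.mk'' ⟨m, hm⟩, ?_⟩
    simp only [Quotient.map'_mk'']
    apply Quotient.sound'
    rw [QuotientGroup.leftRel_apply, Subgroup.mem_subgroupOf]
    have hx : (((⟨m, hMMH hm⟩ : (M ⊔ H : Subgroup G))⁻¹ * g : (M ⊔ H : Subgroup G)) : G) = h := by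
      push_cast [hgmh]
      group
    rw [hx]
    exact Subgroup.mem_sup_right hh

theorem stmt0 {G : Type*} [Group G] (H M N : Subgroup G)
    (hNM : N ≤ M)
    (hHM : H ≤ Subgroup.normalizer (M : Set G)) (hHN : H ≤ Subgroup.normalizer (N : Set G))
    (h1 : N.relIndex M ≠ 0)
    (h2 : (N ⊔ H).relIndex (M ⊔ H) ≠ 0)
    (h3 : (N ⊓ H).relIndex (M ⊓ H) ≠ 0) :
    (N ⊔ H).relIndex (M ⊔ H) = N.relIndex M / (N ⊓ H).relIndex (M ⊓ H) := by
  set X : Subgroup G := M ⊓ (N ⊔ H) with hX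
  have hXeq : X = N ⊔ (M ⊓ H) := aux_dedekind hNM hHN
  have hNX : N ≤ X := le_inf hNM le_sup_left
  have hXM : X ≤ M := inf_le_left
  have step1 : N.relIndex X = (N ⊓ H).relIndex (M ⊓ H) := by
    rw [hXeq, sup_comm, auxA N (M ⊓ H) (inf_le_right.trans hHN),
      ← Subgroup.inf_relIndex_right, ← inf_assoc, inf_of_le_left hNM]
  have step3 : X.relIndex M = (N ⊔ H).relIndex (M ⊔ H) := auxB H M N hNM hHM
  have key : (N ⊓ H).relIndex (M ⊓ H) * ((N ⊔ H).relIndex (M ⊔ H)) = N.relIndex M := by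
    rw [← step1, ← step3]
    exact Subgroup.relIndex_mul_relIndex N X M hNX hXM
  rw [← key, Nat.mul_div_cancel_left _ (Nat.pos_of_ne_zero h3)]
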